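/- Let H₁, …, H_k be distinct (not necessarily disjoint) hexagons in the Kagome lattice and F_i = F_{H_i} the associated alternating ±1 eigenfunctions supported on the hexagon vertices. Then F₁, …, F_k are linearly independent. -/

import Mathlib

open Complex

/-- `w₁ = 1`. -/
noncomputable def kagomeW₁ : ℂ := 1

/-- `w₂ = e^{iπ/3}`. -/
noncomputable def kagomeW₂ : ℂ := Complex.exp (Real.pi * Complex.I / 3)

/-- The vertex set of the Kagome lattice:
`V = (2ℤw₁+2ℤw₂) ∪ (w₁+2ℤw₁+2ℤw₂) ∪ (w₂+2ℤw₁+2ℤw₂) ⊂ ℂ`. -/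
def kagomeV : Set ℂ :=
  {v | ∃ m n : ℤ,
      v = 2 * (m : ℂ) * kagomeW₁ + 2 * (n : ℂ) * kagomeW₂ ∨
      v = kagomeW₁ + 2 * (m : ℂ) * kagomeW₁ + 2 * (n : ℂ) * kagomeW₂ ∨
      v = kagomeW₂ + 2 * (m : ℂ) * kagomeW₁ + 2 * (n : ℂ) * kagomeW₂}

/-- Adjacency in the Kagome lattice: two vertices at Euclidean distance `1`. -/
def kagomeAdj (v w : ℂ) : Prop :=
  v ∈ kagomeV ∧ w ∈ kagomeV ∧ ‖v - w‖ = 1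

/-- The combinatorial (normalized) Laplacian of the Kagome lattice:
`(Δ F)(v) = (1/deg v) ∑_{w∼v} (F(v) - F(w))`, where every vertex has degree `4`.
(The sum over the finitely many neighbours is expressed as a `tsum`.) -/
noncomputable def kagomeLap (F : ℂ → ℝ) (v : ℂ) : ℝ :=
  (1 / 4) * ∑' w : {w : ℂ // kagomeAdj v w}, (F v - F (w : ℂ))

/-- `w₀` is the centre of a hexagon of the Kagome lattice: its six prospective vertices
`w₀ + e^{kπi/3}`, `k = 0,…,5`, all belong to the lattice. -/
def IsHexCenter (w₀ : ℂ) : Prop :=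
  ∀ k : Fin 6, w₀ + Complex.exp (((k : ℕ) : ℂ) * Real.pi * Complex.I / 3) ∈ kagomeV

/-- The alternating `±1` function supported on the vertices of the hexagon with centre `w₀`:
`F_H(v) = (-1)^k` if `v = w₀ + e^{kπi/3}` and `0` otherwise. -/
noncomputable def hexFun (w₀ : ℂ) : ℂ → ℝ := fun v =>
  if h : ∃ k : Fin 6, v = w₀ + Complex.exp (((k : ℕ) : ℂ) * Real.pi * Complex.I / 3) then
    (-1 : ℝ) ^ ((h.choose : ℕ)) else 0

private lemma hexExp_re (k : Fin 6) :
    (Complex.exp (((k : ℕ) : ℂ) * Real.pi * Complex.I / 3)).re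
      = Real.cos ((k : ℕ) * Real.pi / 3) := by
  have : (((k : ℕ) : ℂ) * Real.pi * Complex.I / 3)
      = (((k : ℕ) * Real.pi / 3 : ℝ) : ℂ) * Complex.I := by
    push_cast; ring
  rw [this, Complex.exp_ofReal_mul_I_re]

private lemma hexFun_self_ne_zero (w₀ : ℂ) : hexFun w₀ (w₀ + 1) ≠ 0 := by
  have hex : ∃ k : Fin 6,
      w₀ + 1 = w₀ + Complex.exp (((k : ℕ) : ℂ) * Real.pi * Complex.I / 3) := by
    refine ⟨0, ?_⟩
    norm_num
  rw [hexFun, dif_pos hex]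
  exact pow_ne_zero _ (by norm_num)

private lemma hexFun_eq_zero_of_le (w' w₀ : ℂ) (hle : w'.re ≤ w₀.re) (hne : w' ≠ w₀) :
    hexFun w' (w₀ + 1) = 0 := by
  rw [hexFun, dif_neg]
  rintro ⟨k, hk⟩
  have hre : w₀.re + 1 = w'.re + Real.cos ((k : ℕ) * Real.pi / 3) := by
    have h := congrArg Complex.re hk
    simpa [Complex.add_re, hexExp_re] using h
  have hcos1 : Real.cos ((k : ℕ) * Real.pi / 3) = 1 :=
    le_antisymm (Real.cos_le_one _) (by linarith)
  have hpi := Real.pi_pos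
  have hklt : ((k : ℕ) : ℝ) < 6 := by exact_mod_cast k.isLt
  have hknn : (0 : ℝ) ≤ ((k : ℕ) : ℝ) := by positivity
  have hx0 : ((k : ℕ) : ℝ) * Real.pi / 3 = 0 := by
    rw [Real.cos_eq_one_iff_of_lt_of_lt (by nlinarith) (by nlinarith)] at hcos1
    exact hcos1
  have hk0 : ((k : ℕ) : ℝ) = 0 := by
    have hpine := Real.pi_ne_zero
    have hx0' : ((k : ℕ) : ℝ) * Real.pi = 0 := by linarith
    rcases mul_eq_zero.1 hx0' with h | h
    · exact h
    · exact absurd h hpine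
  have hkc : ((k : ℕ) : ℂ) = 0 := by exact_mod_cast hk0
  rw [hkc] at hk
  simp only [zero_mul, zero_div, Complex.exp_zero] at hk
  exact hne (by linear_combination -hk)

/-- The alternating eigenfunctions `F_{H₁}, …, F_{H_k}` associated to distinct
hexagons `H₁, …, H_k` of the Kagome lattice are linearly independent. -/
theorem hexFun_linearIndependent (k : ℕ) (w : Fin k → ℂ)
    (hhex : ∀ i, IsHexCenter (w i)) (hdistinct : Function.Injective w) :
    LinearIndependent ℝ (fun i : Fin k => hexFun (w i)) := by
  rw [Fintype.linearIndependent_iff]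
  intro g hg
  by_contra hne
  push_neg at hne
  have hSne : (Finset.univ.filter fun i => g i ≠ 0).Nonempty := by
    obtain ⟨i, hi⟩ := hne
    exact ⟨i, by simp [hi]⟩
  obtain ⟨j, hjS, hjmax⟩ :=
    (Finset.univ.filter fun i => g i ≠ 0).exists_max_image (fun i => (w i).re) hSne
  have hgj : g j ≠ 0 := by simpa using hjS
  have hv := congrFun hg (w j + 1)
  rw [Finset.sum_apply] at hv
  have hsum : ∑ i, (g i • hexFun (w i)) (w j + 1) = g j * hexFun (w j) (w j + 1) := by
    rw [Finset.sum_eq_single j]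
    · rfl
    · intro i _ hij
      by_cases hgi : g i = 0
      · simp [hgi]
      · have hiS : i ∈ Finset.univ.filter fun i => g i ≠ 0 := by simp [hgi]
        have hle := hjmax i hiS
        have hwne : w i ≠ w j := fun h => hij (hdistinct h)
        simp [Pi.smul_apply, hexFun_eq_zero_of_le (w i) (w j) hle hwne]
    · intro h
      exact absurd (Finset.mem_univ j) h
  rw [hsum] at hv
  rcases mul_eq_zero.1 hv with h | h
  · exact hgj h
  · exact hexFun_self_ne_zero (w j) h
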